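/- For an order-m subdivision of a weak tropical complex, the structure constants defined on a ridge r' contained in a ridge r of the original complex are integers. Specifically: let m, n, d be positive integers, let y_1, ..., y_n be vectors in Z^n whose pairwise differences span the sublattice of Z^n of vectors with coordinate sum 0 and each of which has coordinate sum m, and let x_1, ..., x_d be vectors in Z^n each with coordinate sum m-1. If alpha_1, ..., alpha_n are integers with alpha_1 + ... + alpha_n = d, then the unique solution vector (alpha'_1, ..., alpha'_n) of the linear system Y * alpha' = (alpha_i + sum_{j=1}^d x_{j,i})_i, where Y is the matrix with columns y_1, ..., y_n, has integer entries. -/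

import Mathlib

open BigOperators

private def castMapQ (n : ℕ) : (Fin n → ℤ) →ₗ[ℤ] (Fin n → ℚ) where
  toFun v := fun k => (v k : ℚ)
  map_add' a b := by
    funext k
    simp only [Pi.add_apply]
    push_cast; ring
  map_smul' c a := by
    funext k
    simp only [Pi.smul_apply, smul_eq_mul, RingHom.id_apply, zsmul_eq_mul]
    push_cast; ring

/-- Proposition 3.2, integrality for ridges of the subdivision
contained in a ridge of the original complex: with `y_1, …, y_n ∈ ℤ^n` the
vertices of a unimodular simplex in the `m`-fold dilated standard simplex
(so each has coordinate sum `m` and pairwise differences spanning the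
zero-sum sublattice), `x_1, …, x_d ∈ ℤ^n` with coordinate sums `m - 1`, and
integers `α_1, …, α_n` summing to `d`, the solution `α'` of the linear system
`Y α' = (α_i + ∑_j x_{j,i})_i` has integer entries. -/
theorem subdivision_structure_constants_integral
    (m n d : ℕ) (hm : 0 < m) (hn : 0 < n) (hd : 0 < d)
    (y : Fin n → Fin n → ℤ)
    (hysum : ∀ j, ∑ i, y j i = (m : ℤ))
    (hspan : ∀ v : Fin n → ℤ, (∑ i, v i = 0) →
      v ∈ Submodule.span ℤ {w : Fin n → ℤ | ∃ j k, w = y j - y k})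
    (x : Fin d → Fin n → ℤ)
    (hxsum : ∀ j, ∑ i, x j i = (m : ℤ) - 1)
    (α : Fin n → ℤ) (hα : ∑ i, α i = (d : ℤ))
    (α' : Fin n → ℚ)
    (hsol : ∀ i, ∑ j, (y j i : ℚ) * α' j = (α i : ℚ) + ∑ j, (x j i : ℚ)) :
    ∀ j, ∃ z : ℤ, α' j = (z : ℚ) := by
  classical
  set φ := castMapQ n with hφdef
  -- the linear map given by the matrix with columns y j (over ℚ)
  set M : Matrix (Fin n) (Fin n) ℚ := fun i j => (y j i : ℚ) with hM
  set T : (Fin n → ℚ) →ₗ[ℚ] (Fin n → ℚ) := M.mulVecLin with hT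
  have hTapply : ∀ (c : Fin n → ℚ) (i : Fin n), T c i = ∑ j, (y j i : ℚ) * c j := by
    intro c i
    rw [hT, Matrix.mulVecLin_apply]
    simp [Matrix.mulVec, dotProduct, hM]
  -- each column is in the range of T
  have hcol : ∀ j, φ (y j) ∈ LinearMap.range T := by
    intro j
    refine ⟨Pi.single j 1, ?_⟩
    funext i
    rw [hTapply]
    simp [Pi.single_apply, castMapQ, hφdef]
  -- the image of the ℤ-span of differences is in the range of T
  have hdiff : ∀ v : Fin n → ℤ,
      v ∈ Submodule.span ℤ {w : Fin n → ℤ | ∃ j k, w = y j - y k} →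
      φ v ∈ LinearMap.range T := by
    intro v hv
    have : φ v ∈ Submodule.map φ (Submodule.span ℤ {w : Fin n → ℤ | ∃ j k, w = y j - y k}) :=
      Submodule.mem_map_of_mem hv
    rw [Submodule.map_span] at this
    have hle : Submodule.span ℤ (φ '' {w : Fin n → ℤ | ∃ j k, w = y j - y k}) ≤
        (LinearMap.range T).restrictScalars ℤ := by
      rw [Submodule.span_le]
      rintro _ ⟨w, ⟨j, k, rfl⟩, rfl⟩
      have : φ (y j - y k) = φ (y j) - φ (y k) := map_sub φ _ _
      rw [this]
      exact sub_mem (hcol j) (hcol k)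
    exact hle this
  -- T is surjective
  have i0 : Fin n := ⟨0, hn⟩
  have hmQ : (m : ℚ) ≠ 0 := by exact_mod_cast hm.ne'
  have hsurj : Function.Surjective T := by
    rw [← LinearMap.range_eq_top, ← top_le_iff, ← (Pi.basisFun ℚ (Fin n)).span_eq,
      Submodule.span_le]
    rintro _ ⟨i, rfl⟩
    -- e_i = (1/m) • (φ u + φ (y i0)) where u = m • e_i - y i0
    set u : Fin n → ℤ := fun k => (m : ℤ) * (if k = i then 1 else 0) - y i0 k with hu
    have husum : ∑ k, u k = 0 := by
      simp [hu, Finset.sum_sub_distrib, ← Finset.mul_sum, hysum i0]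
    have hurange : φ u ∈ LinearMap.range T := hdiff u (hspan u husum)
    have : (Pi.basisFun ℚ (Fin n)) i = (m : ℚ)⁻¹ • (φ u + φ (y i0)) := by
      funext k
      simp only [Pi.basisFun_apply, Pi.smul_apply, Pi.add_apply, castMapQ, hφdef, hu,
        smul_eq_mul]
      push_cast
      by_cases h : k = i <;> simp [h, Pi.single_apply] <;> field_simp
    rw [this]
    exact Submodule.smul_mem _ _ (add_mem hurange (hcol i0))
  have hinj : Function.Injective T := by
    rwa [← LinearMap.injective_iff_surjective] at hsurj
  -- the right-hand side vector and an integral solution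
  set b : Fin n → ℤ := fun i => α i + ∑ j, x j i with hb
  have hbsum : ∑ i, b i = (d : ℤ) * m := by
    have hc : ∑ i, ∑ j, x j i = ∑ j : Fin d, ∑ i, x j i := Finset.sum_comm
    simp only [hb, Finset.sum_add_distrib, hα, hc]
    simp [hxsum]
  set w : Fin n → ℤ := b - (d : ℤ) • y i0 with hw
  have hwsum : ∑ k, w k = 0 := by
    simp [hw, Finset.sum_sub_distrib, ← Finset.mul_sum, hysum i0, hbsum]
  have hwb : b ∈ Submodule.span ℤ (Set.range y) := by
    have hws : w ∈ Submodule.span ℤ (Set.range y) := by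
      have h1 := hspan w hwsum
      have hle : Submodule.span ℤ {w : Fin n → ℤ | ∃ j k, w = y j - y k} ≤
          Submodule.span ℤ (Set.range y) := by
        rw [Submodule.span_le]
        rintro _ ⟨j, k, rfl⟩
        exact sub_mem (Submodule.subset_span ⟨j, rfl⟩) (Submodule.subset_span ⟨k, rfl⟩)
      exact hle h1
    have hy0 : y i0 ∈ Submodule.span ℤ (Set.range y) := Submodule.subset_span ⟨i0, rfl⟩
    have : b = w + (d : ℤ) • y i0 := by rw [hw]; abel
    rw [this]
    exact add_mem hws (Submodule.smul_mem _ _ hy0)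
  rw [Submodule.mem_span_range_iff_exists_fun] at hwb
  obtain ⟨β, hβ⟩ := hwb
  -- β cast to ℚ is also a solution
  have hβQ : ∀ i, ∑ j, (y j i : ℚ) * (β j : ℚ) = (α i : ℚ) + ∑ j, (x j i : ℚ) := by
    intro i
    have := congrFun hβ i
    simp only [Finset.sum_apply, Pi.smul_apply, smul_eq_mul, hb] at this
    have : ((∑ j, β j * y j i : ℤ) : ℚ) = ((α i + ∑ j, x j i : ℤ) : ℚ) := by
      exact_mod_cast congrArg (Int.cast : ℤ → ℚ) this
    push_cast at this
    rw [← this]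
    apply Finset.sum_congr rfl
    intro j _
    ring
  have hTeq : T α' = T (fun j => (β j : ℚ)) := by
    funext i
    rw [hTapply, hTapply, hsol i, hβQ i]
  have := hinj hTeq
  intro j
  exact ⟨β j, congrFun this j⟩
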